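/- Let $h$ be a holomorphic function on an open neighborhood of the closed unit disc in $\mathbb{C}$. If $w\,h(w)$ is real-valued for every $w$ on the unit circle, then $h \equiv 0$ on the closed unit disc. -/

import Mathlib

open Metric Set Filter Topology

/-- If `h` is holomorphic on a neighborhood of the closed unit disc and `w * h w` is
real for every `w` on the unit circle, then `h ≡ 0` on the closed unit disc. -/
theorem stmt_2 (h : ℂ → ℂ) (U : Set ℂ) (hUopen : IsOpen U)
    (hUD : closedBall (0 : ℂ) 1 ⊆ U) (hh : DifferentiableOn ℂ h U)
    (hreal : ∀ w : ℂ, ‖w‖ = 1 → (w * h w).im = 0) :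
    ∀ z ∈ closedBall (0 : ℂ) 1, h z = 0 := by
  set g : ℂ → ℂ := fun w => w * h w with hgdef
  have hgU : DifferentiableOn ℂ g U := differentiableOn_id.mul hh
  have hball : closure (ball (0 : ℂ) 1) = closedBall 0 1 := closure_ball 0 one_ne_zero
  have hfr : frontier (ball (0 : ℂ) 1) = sphere 0 1 := frontier_ball 0 one_ne_zero
  -- Step 1: `Im (g z) = 0` on the closed ball, by the maximum modulus principle
  -- applied to `exp (± I * g)`.
  have key : ∀ ε : ℝ, ∀ z ∈ closedBall (0 : ℂ) 1, Real.exp (-(ε * (g z).im)) ≤ 1 := by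
    intro ε z hz
    have hd : DiffContOnCl ℂ (fun w => Complex.exp ((ε : ℂ) * Complex.I * g w))
        (ball (0 : ℂ) 1) := by
      apply DifferentiableOn.diffContOnCl
      rw [hball]
      exact (((differentiableOn_const _).mul (hgU.mono hUD))).cexp
    have hbd := Complex.norm_le_of_forall_mem_frontier_norm_le isBounded_ball hd
      (C := 1) ?_ (hball ▸ hz)
    · calc Real.exp (-(ε * (g z).im))
          = ‖Complex.exp ((ε : ℂ) * Complex.I * g z)‖ := by
            rw [Complex.norm_exp]
            congr 1
            simp [Complex.mul_re, Complex.mul_im]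
      _ ≤ 1 := hbd
    · intro w hw
      rw [hfr, mem_sphere_zero_iff_norm] at hw
      have : (g w).im = 0 := hreal w hw
      rw [Complex.norm_exp]
      have : ((ε : ℂ) * Complex.I * g w).re = -(ε * (g w).im) := by
        simp [Complex.mul_re, Complex.mul_im]
      rw [this, hreal w hw]
      simp
  have him : ∀ z ∈ closedBall (0 : ℂ) 1, (g z).im = 0 := by
    intro z hz
    have h1 := Real.exp_le_one_iff.mp (key 1 z hz)
    have h2 := Real.exp_le_one_iff.mp (key (-1) z hz)
    nlinarith
  -- Step 2: by the open mapping theorem, `g` is constant (hence `0`) on the open ball.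
  have hgan : AnalyticOnNhd ℂ g (ball (0 : ℂ) 1) :=
    (hgU.mono (ball_subset_closedBall.trans hUD)).analyticOnNhd isOpen_ball
  have hgz : ∀ z ∈ ball (0 : ℂ) 1, g z = 0 := by
    rcases hgan.is_constant_or_isOpen (convex_ball _ _).isPreconnected with ⟨w, hw⟩ | hopen
    · intro z hz
      have h0 : g 0 = 0 := by simp [hgdef]
      rw [hw z hz, ← hw 0 (by simp), h0]
    · exfalso
      have hopen' : IsOpen (g '' ball (0 : ℂ) 1) :=
        hopen _ (subset_refl _) isOpen_ball
      have h0mem : g 0 ∈ g '' ball (0 : ℂ) 1 := ⟨0, by simp, rfl⟩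
      rcases Metric.isOpen_iff.mp hopen' _ h0mem with ⟨ε, hε, hsub⟩
      have hmem : g 0 + ((ε / 2 : ℝ) : ℂ) * Complex.I ∈ ball (g 0) ε := by
        simp only [mem_ball, dist_eq_norm]
        rw [add_sub_cancel_left]
        rw [norm_mul, Complex.norm_I, mul_one, Complex.norm_real, Real.norm_eq_abs,
          abs_of_pos (by linarith)]
        linarith
      rcases hsub hmem with ⟨w, hw, hweq⟩
      have : (g w).im = 0 := him w (ball_subset_closedBall hw)
      rw [hweq] at this
      simp [Complex.add_im, Complex.mul_im] at this
      have h0im : (g 0).im = 0 := him 0 (by simp)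
      rw [h0im] at this
      linarith
  -- Step 3: `h = 0` on the open ball.
  have hcont : ∀ z ∈ U, ContinuousAt h z :=
    fun z hz => (hh.differentiableAt (hUopen.mem_nhds hz)).continuousAt
  have hzero : ∀ z ∈ ball (0 : ℂ) 1, h z = 0 := by
    intro z hz
    rcases eq_or_ne z 0 with rfl | hne
    · -- limit along punctured neighborhoods
      have hc : Filter.Tendsto h (𝓝[≠] (0 : ℂ)) (𝓝 (h 0)) :=
        ((hcont 0 (hUD (by simp))).tendsto).mono_left nhdsWithin_le_nhds
      have hc0 : Filter.Tendsto h (𝓝[≠] (0 : ℂ)) (𝓝 0) := by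
        apply Filter.Tendsto.congr' _ tendsto_const_nhds
        have hball1 : ball (0 : ℂ) 1 ∈ 𝓝[≠] (0 : ℂ) :=
          nhdsWithin_le_nhds (ball_mem_nhds 0 one_pos)
        have hne' : {w : ℂ | w ≠ 0} ∈ 𝓝[≠] (0 : ℂ) := self_mem_nhdsWithin
        filter_upwards [hball1, hne'] with w hw1 hw2
        have := hgz w hw1
        simp only [hgdef] at this
        rcases mul_eq_zero.mp this with h' | h'
        · exact absurd h' hw2
        · exact h'.symm
      exact tendsto_nhds_unique hc hc0
    · have := hgz z hz
      simp only [hgdef] at this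
      rcases mul_eq_zero.mp this with h' | h'
      · exact absurd h' hne
      · exact h'
  -- Step 4: extend to the closed ball by continuity.
  intro z hz
  have hzcl : z ∈ closure (ball (0 : ℂ) 1) := hball ▸ hz
  have hnb : (𝓝[ball (0 : ℂ) 1] z).NeBot := mem_closure_iff_nhdsWithin_neBot.mp hzcl
  have h1 : Filter.Tendsto h (𝓝[ball (0 : ℂ) 1] z) (𝓝 (h z)) :=
    ((hcont z (hUD hz)).tendsto).mono_left nhdsWithin_le_nhds
  have h2 : Filter.Tendsto h (𝓝[ball (0 : ℂ) 1] z) (𝓝 0) := by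
    apply Filter.Tendsto.congr' _ tendsto_const_nhds
    filter_upwards [self_mem_nhdsWithin] with w hw
    exact (hzero w hw).symm
  exact tendsto_nhds_unique h1 h2
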